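/- Set v = (α21·v1 + α12·v2)/α. There exist real constants a10 and a20 such that a1(t) − v·t → a10 and a2(t) − v·t → a20 as t → ∞ (i.e. a_i(t) = v·t + a_{i0} + o(1)). -/

import Mathlib

open Filter Real

/-- A function with vanishing derivative on `[0, ∞)` is constant there. -/
lemma const_of_deriv_zero (f : ℝ → ℝ) (hf : ∀ t : ℝ, 0 ≤ t → HasDerivAt f 0 t) :
    ∀ t : ℝ, 0 ≤ t → f t = f 0 := by
  intro t ht
  have hcont : ContinuousOn f (Set.Icc 0 t) := fun x hx =>
    ((hf x hx.1).continuousAt).continuousWithinAt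
  exact constant_of_has_deriv_right_zero hcont
    (fun x hx => ((hf x hx.1).hasDerivWithinAt)) t ⟨ht, le_refl t⟩

/-- With `v = (α21 * v1 + α12 * v2)/(α12 + α21)`, there exist constants `a10`, `a20`
such that `a1 t - v * t → a10` and `a2 t - v * t → a20` as `t → ∞`. -/
theorem stmt_3 (v1 v2 α12 α21 : ℝ) (h12 : 0 < α12) (h21 : 0 < α21)
    (a1 a2 : ℝ → ℝ)
    (h1 : ∀ t : ℝ, 0 ≤ t → HasDerivAt a1 (v1 + α12 * (a2 t - a1 t)) t)
    (h2 : ∀ t : ℝ, 0 ≤ t → HasDerivAt a2 (v2 + α21 * (a1 t - a2 t)) t) :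
    ∃ a10 a20 : ℝ,
      Filter.Tendsto (fun t => a1 t - (α21 * v1 + α12 * v2) / (α12 + α21) * t)
        Filter.atTop (nhds a10) ∧
      Filter.Tendsto (fun t => a2 t - (α21 * v1 + α12 * v2) / (α12 + α21) * t)
        Filter.atTop (nhds a20) := by
  set α : ℝ := α12 + α21 with hαdef
  have hα : 0 < α := by positivity
  have hαne : α ≠ 0 := ne_of_gt hα
  set v : ℝ := (α21 * v1 + α12 * v2) / α with hvdef
  set c : ℝ := (v1 - v2) / α with hcdef
  set K : ℝ := a1 0 - a2 0 - c with hKdef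
  -- Step 1 : the difference satisfies d t = c + K exp(-α t)
  have hgderiv : ∀ t : ℝ, 0 ≤ t →
      HasDerivAt (fun t => (a1 t - a2 t - c) * Real.exp (α * t)) 0 t := by
    intro t ht
    have hE : HasDerivAt (fun t : ℝ => Real.exp (α * t))
        (Real.exp (α * t) * α) t := by
      simpa using ((hasDerivAt_id t).const_mul α).exp
    have hd : HasDerivAt (fun t => a1 t - a2 t - c)
        ((v1 + α12 * (a2 t - a1 t)) - (v2 + α21 * (a1 t - a2 t))) t :=
      ((h1 t ht).sub (h2 t ht)).sub_const c
    have := hd.mul hE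
    convert this using 1
    all_goals try rfl
    have hEne := Real.exp_ne_zero (α * t)
    rw [hcdef, hαdef]
    field_simp
    ring
  have hgconst := const_of_deriv_zero _ hgderiv
  have hd : ∀ t : ℝ, 0 ≤ t → a1 t - a2 t = c + K * Real.exp (-(α * t)) := by
    intro t ht
    have h' : (a1 t - a2 t - c) * Real.exp (α * t) = K := by
      have := hgconst t ht
      simpa [hKdef] using this
    have hEne : Real.exp (α * t) ≠ 0 := Real.exp_ne_zero _
    rw [Real.exp_neg]
    field_simp
    nlinarith [h']
  -- Step 2 : a1 t - v t - (α12 K / α) exp(-α t) is constant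
  have hEderiv : ∀ t : ℝ, HasDerivAt (fun t : ℝ => Real.exp (-(α * t)))
      (Real.exp (-(α * t)) * (-α)) t := by
    intro t
    simpa using (((hasDerivAt_id t).const_mul α).neg).exp
  have hf1deriv : ∀ t : ℝ, 0 ≤ t →
      HasDerivAt (fun t => a1 t - v * t - α12 * K / α * Real.exp (-(α * t))) 0 t := by
    intro t ht
    have hF := ((h1 t ht).sub ((hasDerivAt_id t).const_mul v)).sub
      ((hEderiv t).const_mul (α12 * K / α))
    convert hF using 1
    all_goals try rfl
    have h21' : a2 t - a1 t = -(c + K * Real.exp (-(α * t))) := by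
      have := hd t ht; linarith
    rw [h21', hvdef, hcdef, hαdef]
    field_simp
    ring
  have hf2deriv : ∀ t : ℝ, 0 ≤ t →
      HasDerivAt (fun t => a2 t - v * t + α21 * K / α * Real.exp (-(α * t))) 0 t := by
    intro t ht
    have hF := ((h2 t ht).sub ((hasDerivAt_id t).const_mul v)).add
      ((hEderiv t).const_mul (α21 * K / α))
    convert hF using 1
    all_goals try rfl
    have h12' : a1 t - a2 t = c + K * Real.exp (-(α * t)) := hd t ht
    rw [h12', hvdef, hcdef, hαdef]
    field_simp
    ring
  have hf1const := const_of_deriv_zero _ hf1deriv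
  have hf2const := const_of_deriv_zero _ hf2deriv
  -- Step 3 : limits
  have hexp0 : Tendsto (fun t : ℝ => Real.exp (-(α * t))) atTop (nhds 0) := by
    apply Real.tendsto_exp_atBot.comp
    exact tendsto_neg_atBot_iff.mpr ((tendsto_const_mul_atTop_of_pos hα).mpr tendsto_id)
  refine ⟨a1 0 - v * 0 - α12 * K / α * Real.exp (-(α * 0)) + α12 * K / α * 0,
          a2 0 - v * 0 + α21 * K / α * Real.exp (-(α * 0)) - α21 * K / α * 0, ?_, ?_⟩
  · have hlim : Tendsto (fun t => (a1 0 - v * 0 - α12 * K / α * Real.exp (-(α * 0)))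
        + α12 * K / α * Real.exp (-(α * t))) atTop
        (nhds (a1 0 - v * 0 - α12 * K / α * Real.exp (-(α * 0)) + α12 * K / α * 0)) :=
      tendsto_const_nhds.add (hexp0.const_mul _)
    refine hlim.congr' ?_
    filter_upwards [Filter.eventually_ge_atTop (0:ℝ)] with t ht
    have := hf1const t ht
    rw [hvdef]
    linarith
  · have hlim : Tendsto (fun t => (a2 0 - v * 0 + α21 * K / α * Real.exp (-(α * 0)))
        - α21 * K / α * Real.exp (-(α * t))) atTop
        (nhds (a2 0 - v * 0 + α21 * K / α * Real.exp (-(α * 0)) - α21 * K / α * 0)) :=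
      tendsto_const_nhds.sub (hexp0.const_mul _)
    refine hlim.congr' ?_
    filter_upwards [Filter.eventually_ge_atTop (0:ℝ)] with t ht
    have := hf2const t ht
    rw [hvdef]
    linarith
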